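/- (Bilinear Discretization Lemma) For any x₁, x₂ ∈ R^n with ‖x₁‖_∞, ‖x₂‖_∞ ≤ 1/2 and any real n×n matrix M, there exist y₁, y₂ ∈ {±1/2, ±1/4, …}^n such that |x₁^T M x₂| ≤ |y₁^T M y₂|, ‖y₁‖² ≤ 4‖x₁‖², ‖y₂‖² ≤ 4‖x₂‖², and each entry of x₁, x₂ with absolute value between 2^{−i−1} and 2^{−i} is rounded to either ±2^{−i} or ±2^{−i−1}. -/

import Mathlib

open Matrix Finset

/-- Per-coordinate rounding condition. -/
def GoodRound (x y : ℝ) : Prop :=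
  y^2 ≤ 4 * x^2 ∧ (x = 0 → y = 0) ∧
  (x ≠ 0 → ∃ i : ℕ, y = (2:ℝ)^(-(i:ℤ)-1) ∨ y = -(2:ℝ)^(-(i:ℤ)-1)) ∧
  (∀ i : ℕ, (2:ℝ)^(-(i:ℤ)-1) < |x| → |x| < (2:ℝ)^(-(i:ℤ)) →
    (|y| = (2:ℝ)^(-(i:ℤ)) ∨ |y| = (2:ℝ)^(-(i:ℤ)-1)) ∧ Real.sign y = Real.sign x)

lemma GoodRound.neg {x y : ℝ} (h : GoodRound x y) : GoodRound (-x) (-y) := by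
  obtain ⟨h1, h2, h3, h4⟩ := h
  refine ⟨by nlinarith, fun hx => by simp [h2 (by linarith [neg_eq_zero.mp hx])], ?_, ?_⟩
  · intro hx
    obtain ⟨i, hi⟩ := h3 (fun h0 => hx (by simp [h0]))
    exact ⟨i, by rcases hi with h | h <;> simp [h]⟩
  · intro i hi1 hi2
    rw [abs_neg] at hi1 hi2
    obtain ⟨ha, hs⟩ := h4 i hi1 hi2
    exact ⟨by simpa using ha, by rw [Real.sign_neg, Real.sign_neg, hs]⟩

lemma exp_exists {z : ℤ} (hz : z ≤ -1) : ∃ i : ℕ, -(i:ℤ) - 1 = z :=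
  ⟨(-z-1).toNat, by rw [Int.toNat_of_nonneg (by omega)]; ring⟩

lemma pow2_pos (z : ℤ) : (0:ℝ) < (2:ℝ)^z := zpow_pos (by norm_num) z

lemma exists_round_pos (x : ℝ) (h0 : 0 < x) (hx : x ≤ 1/2) :
    ∃ l u θ : ℝ, 0 ≤ θ ∧ θ ≤ 1 ∧ x = θ * u + (1-θ) * l ∧
      GoodRound x l ∧ GoodRound x u := by
  obtain ⟨z, hz1, hz2⟩ := exists_mem_Ico_zpow h0 (by norm_num : (1:ℝ) < 2)
  have hxabs : |x| = x := abs_of_pos h0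
  have hz0 : z ≤ -1 := by
    by_contra h
    have : (2:ℝ)^(0:ℤ) ≤ (2:ℝ)^z :=
      zpow_le_zpow_right₀ (by norm_num) (by omega)
    simp only [zpow_zero] at this; linarith
  rcases eq_or_lt_of_le hz1 with heq | hlt
  · -- x = 2^z exactly: take l = u = x
    obtain ⟨i, hi⟩ := exp_exists hz0
    have hGood : GoodRound x x := by
      refine ⟨by nlinarith, fun h => absurd h (ne_of_gt h0), fun _ => ⟨i, Or.inl ?_⟩, ?_⟩
      · rw [hi, heq]
      · intro k hk1 hk2
        exfalso
        rw [hxabs, ← heq] at hk1 hk2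
        have h1 : -(k:ℤ) - 1 < z := (zpow_lt_zpow_iff_right₀ (by norm_num)).mp hk1
        have h2 : z < -(k:ℤ) := (zpow_lt_zpow_iff_right₀ (by norm_num)).mp hk2
        omega
    exact ⟨x, x, 1, by norm_num, by norm_num, by ring, hGood, hGood⟩
  · -- 2^z < x < 2^(z+1)
    have hz0' : z ≤ -2 := by
      by_contra h
      have : (2:ℝ)^(-1:ℤ) ≤ (2:ℝ)^z :=
        zpow_le_zpow_right₀ (by norm_num) (by omega)
      norm_num at this; linarith
    set l := (2:ℝ)^z with hl
    set u := (2:ℝ)^(z+1) with hu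
    have hul : u = 2 * l := by rw [hu, hl, zpow_add_one₀ (by norm_num : (2:ℝ) ≠ 0)]; ring
    have hlpos := pow2_pos z
    have hupos := pow2_pos (z+1)
    have huniq : ∀ k : ℕ, (2:ℝ)^(-(k:ℤ)-1) < |x| → |x| < (2:ℝ)^(-(k:ℤ)) → z = -(k:ℤ)-1 := by
      intro k hk1 hk2
      rw [hxabs] at hk1 hk2
      have h1 : -(k:ℤ) - 1 < z + 1 := (zpow_lt_zpow_iff_right₀ (by norm_num)).mp (hk1.trans hz2)
      have h2 : z < -(k:ℤ) := (zpow_lt_zpow_iff_right₀ (by norm_num)).mp (hlt.trans hk2)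
      omega
    have hGl : GoodRound x l := by
      obtain ⟨i, hi⟩ := exp_exists hz0
      refine ⟨by nlinarith, fun h => absurd h (ne_of_gt h0), fun _ => ⟨i, Or.inl (by rw [hi])⟩, ?_⟩
      intro k hk1 hk2
      have hzk := huniq k hk1 hk2
      refine ⟨Or.inr ?_, ?_⟩
      · rw [abs_of_pos hlpos]; show (2:ℝ)^z = _; rw [hzk]
      · rw [Real.sign_of_pos hlpos, Real.sign_of_pos h0]
    have hGu : GoodRound x u := by
      obtain ⟨i, hi⟩ := exp_exists (show z + 1 ≤ -1 by omega)
      refine ⟨by nlinarith, fun h => absurd h (ne_of_gt h0), fun _ => ⟨i, Or.inl (by rw [hi])⟩, ?_⟩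
      intro k hk1 hk2
      have hzk := huniq k hk1 hk2
      refine ⟨Or.inl ?_, ?_⟩
      · rw [abs_of_pos hupos]; show (2:ℝ)^(z+1) = _; rw [hzk]; congr 1; omega
      · rw [Real.sign_of_pos hupos, Real.sign_of_pos h0]
    refine ⟨l, u, (x - l)/(u - l), ?_, ?_, ?_, hGl, hGu⟩
    · apply div_nonneg <;> linarith
    · rw [div_le_one (by linarith)]; linarith
    · have hne : u - l ≠ 0 := by intro h; rw [hul] at h; linarith
      have hc : (x - l)/(u - l)*(u-l) = x - l := div_mul_cancel₀ _ hne
      linear_combination -hc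

lemma exists_round (x : ℝ) (hx : |x| ≤ 1/2) :
    ∃ l u θ : ℝ, 0 ≤ θ ∧ θ ≤ 1 ∧ x = θ * u + (1-θ) * l ∧
      GoodRound x l ∧ GoodRound x u := by
  rcases lt_trichotomy x 0 with h | h | h
  · obtain ⟨l, u, θ, h1, h2, h3, h4, h5⟩ :=
      exists_round_pos (-x) (by linarith) (by rw [abs_of_neg h] at hx; linarith)
    exact ⟨-l, -u, θ, h1, h2, by linarith, by simpa using h4.neg, by simpa using h5.neg⟩
  · refine ⟨0, 0, 0, le_refl _, by norm_num, by simp [h], ?_, ?_⟩ <;>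
    · refine ⟨by nlinarith, fun _ => rfl, fun hc => absurd h hc, ?_⟩
      intro i hi1 _
      exfalso
      rw [h] at hi1
      simp at hi1
      linarith [pow2_pos (-(i:ℤ)-1)]
  · exact exists_round_pos x h (by rwa [abs_of_pos h] at hx)

lemma round_vector (n : ℕ) (c x : Fin n → ℝ) (hx : ∀ j, |x j| ≤ 1/2) :
    ∃ y : Fin n → ℝ, (∀ j, GoodRound (x j) (y j)) ∧
      |∑ j, c j * x j| ≤ |∑ j, c j * y j| := by
  suffices h : ∀ s : Finset (Fin n), ∃ y : Fin n → ℝ,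
      (∀ j ∈ s, GoodRound (x j) (y j)) ∧ (∀ j ∉ s, y j = x j) ∧
      |∑ j, c j * x j| ≤ |∑ j, c j * y j| by
    obtain ⟨y, h1, _, h3⟩ := h Finset.univ
    exact ⟨y, fun j => h1 j (mem_univ j), h3⟩
  intro s
  induction s using Finset.induction_on with
  | empty => exact ⟨x, by simp, fun _ _ => rfl, le_refl _⟩
  | @insert j0 s hj0 ih =>
    obtain ⟨y, h1, h2, h3⟩ := ih
    obtain ⟨l, u, θ, hθ0, hθ1, hxθ, hGl, hGu⟩ := exists_round (x j0) (hx j0)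
    have hy0 : y j0 = x j0 := h2 j0 hj0
    have key : ∀ t : ℝ, ∑ j, c j * Function.update y j0 t j
        = (∑ j ∈ Finset.univ.erase j0, c j * y j) + c j0 * t := by
      intro t
      rw [← Finset.add_sum_erase _ _ (mem_univ j0), Function.update_self, add_comm]
      congr 1
      exact Finset.sum_congr rfl fun j hj =>
        by rw [Function.update_of_ne (Finset.ne_of_mem_erase hj)]
    have hyform : ∑ j, c j * y j
        = θ * ((∑ j ∈ Finset.univ.erase j0, c j * y j) + c j0 * u)
          + (1-θ) * ((∑ j ∈ Finset.univ.erase j0, c j * y j) + c j0 * l) := by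
      rw [← Finset.add_sum_erase _ _ (mem_univ j0), hy0, hxθ]
      ring
    set A := (∑ j ∈ Finset.univ.erase j0, c j * y j) + c j0 * u with hA
    set B := (∑ j ∈ Finset.univ.erase j0, c j * y j) + c j0 * l with hB
    have hcx : |∑ j, c j * y j| ≤ θ * |A| + (1-θ) * |B| := by
      rw [hyform]
      calc |θ * A + (1-θ) * B| ≤ |θ * A| + |(1-θ) * B| := abs_add_le _ _
        _ = θ * |A| + (1-θ) * |B| := by
            rw [abs_mul, abs_mul, abs_of_nonneg hθ0,
              abs_of_nonneg (show (0:ℝ) ≤ 1 - θ by linarith)]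
    have habs : |∑ j, c j * y j| ≤ |A| ∨ |∑ j, c j * y j| ≤ |B| := by
      rcases le_total |A| |B| with h | h
      · exact Or.inr (by nlinarith)
      · exact Or.inl (by nlinarith)
    rcases habs with hc | hc
    · refine ⟨Function.update y j0 u, ?_, ?_, ?_⟩
      · intro j hj
        rcases Finset.mem_insert.mp hj with h | h
        · subst h; rw [Function.update_self]; exact hGu
        · have hne : j ≠ j0 := by rintro rfl; exact hj0 h
          rw [Function.update_of_ne hne]; exact h1 j h
      · intro j hj
        rw [Function.update_of_ne (by rintro rfl; exact hj (mem_insert_self _ _)),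
          h2 j (fun h => hj (mem_insert_of_mem h))]
      · rw [key]; exact h3.trans hc
    · refine ⟨Function.update y j0 l, ?_, ?_, ?_⟩
      · intro j hj
        rcases Finset.mem_insert.mp hj with h | h
        · subst h; rw [Function.update_self]; exact hGl
        · have hne : j ≠ j0 := by rintro rfl; exact hj0 h
          rw [Function.update_of_ne hne]; exact h1 j h
      · intro j hj
        rw [Function.update_of_ne (by rintro rfl; exact hj (mem_insert_self _ _)),
          h2 j (fun h => hj (mem_insert_of_mem h))]
      · rw [key]; exact h3.trans hc

/-- Bilinear Discretization Lemma: for `x₁, x₂ ∈ ℝ^n` with sup-norm at most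
`1/2` and any real matrix `M`, there are `y₁, y₂` with entries in `{0} ∪ {±1/2, ±1/4, …}`
such that `|x₁ᵀMx₂| ≤ |y₁ᵀMy₂|`, `‖y₁‖² ≤ 4‖x₁‖²`, `‖y₂‖² ≤ 4‖x₂‖²`, and each entry of
`x₁, x₂` with absolute value between `2^{−i−1}` and `2^{−i}` is rounded, preserving sign,
to one of `±2^{−i}`, `±2^{−i−1}`. -/
theorem bilinear_discretization_lemma
    (n : ℕ) (M : Matrix (Fin n) (Fin n) ℝ)
    (x₁ x₂ : Fin n → ℝ) (hx₁ : ∀ j, |x₁ j| ≤ 1/2) (hx₂ : ∀ j, |x₂ j| ≤ 1/2) :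
    ∃ y₁ y₂ : Fin n → ℝ,
      |x₁ ⬝ᵥ M.mulVec x₂| ≤ |y₁ ⬝ᵥ M.mulVec y₂| ∧
      (∑ j, (y₁ j)^2) ≤ 4 * ∑ j, (x₁ j)^2 ∧
      (∑ j, (y₂ j)^2) ≤ 4 * ∑ j, (x₂ j)^2 ∧
      (∀ j, (x₁ j = 0 → y₁ j = 0) ∧
        (x₁ j ≠ 0 → ∃ i : ℕ, y₁ j = (2:ℝ)^(-(i:ℤ)-1) ∨ y₁ j = -(2:ℝ)^(-(i:ℤ)-1))) ∧
      (∀ j, (x₂ j = 0 → y₂ j = 0) ∧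
        (x₂ j ≠ 0 → ∃ i : ℕ, y₂ j = (2:ℝ)^(-(i:ℤ)-1) ∨ y₂ j = -(2:ℝ)^(-(i:ℤ)-1))) ∧
      (∀ j, ∀ i : ℕ, (2:ℝ)^(-(i:ℤ)-1) < |x₁ j| → |x₁ j| < (2:ℝ)^(-(i:ℤ)) →
        (|y₁ j| = (2:ℝ)^(-(i:ℤ)) ∨ |y₁ j| = (2:ℝ)^(-(i:ℤ)-1)) ∧
        Real.sign (y₁ j) = Real.sign (x₁ j)) ∧
      (∀ j, ∀ i : ℕ, (2:ℝ)^(-(i:ℤ)-1) < |x₂ j| → |x₂ j| < (2:ℝ)^(-(i:ℤ)) →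
        (|y₂ j| = (2:ℝ)^(-(i:ℤ)) ∨ |y₂ j| = (2:ℝ)^(-(i:ℤ)-1)) ∧
        Real.sign (y₂ j) = Real.sign (x₂ j)) := by
  obtain ⟨y₁, hG1, hle1⟩ := round_vector n (fun j => M.mulVec x₂ j) x₁ hx₁
  obtain ⟨y₂, hG2, hle2⟩ := round_vector n (fun j => vecMul y₁ M j) x₂ hx₂
  have e1 : ∀ z : Fin n → ℝ, z ⬝ᵥ M.mulVec x₂ = ∑ j, (fun j => M.mulVec x₂ j) j * z j := by
    intro z; simp [dotProduct, mul_comm]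
  have e2 : ∀ z : Fin n → ℝ, y₁ ⬝ᵥ M.mulVec z = ∑ j, (fun j => vecMul y₁ M j) j * z j := by
    intro z; rw [Matrix.dotProduct_mulVec]; simp [dotProduct]
  refine ⟨y₁, y₂, ?_, ?_, ?_, ?_, ?_, ?_, ?_⟩
  · calc |x₁ ⬝ᵥ M.mulVec x₂| ≤ |y₁ ⬝ᵥ M.mulVec x₂| := by rw [e1, e1]; exact hle1
      _ ≤ |y₁ ⬝ᵥ M.mulVec y₂| := by rw [e2, e2]; exact hle2
  · rw [Finset.mul_sum]; exact Finset.sum_le_sum fun j _ => (hG1 j).1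
  · rw [Finset.mul_sum]; exact Finset.sum_le_sum fun j _ => (hG2 j).1
  · exact fun j => ⟨(hG1 j).2.1, (hG1 j).2.2.1⟩
  · exact fun j => ⟨(hG2 j).2.1, (hG2 j).2.2.1⟩
  · exact fun j => (hG1 j).2.2.2
  · exact fun j => (hG2 j).2.2.2
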